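/- Let B = {b_1 < b_2 < b_3 < …} be an infinite strictly increasing sequence of integers with b_1 ≥ 3 and b_2 = 3b_1 + 2. Then there is no infinite strictly increasing sequence A = {a_1 < a_2 < …} of positive integers such that P(A) = ℕ \ B (where B is identified with its set of values). -/

import Mathlib

/-- The set of all finite subset sums of `A`: all sums of finitely many
pairwise distinct elements of `A`; by convention `0 ∈ subsetSums A`. -/
def subsetSums (A : Set ℕ) : Set ℕ :=
  {n | ∃ F : Finset ℕ, ↑F ⊆ A ∧ F.sum id = n}

private lemma sums_char (T : Finset ℕ) : ∀ b : ℕ, 0 ∉ T →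
    (∀ m < b, ∃ F ⊆ T, F.sum id = m) →
    (∀ F ⊆ T, F.sum id ≠ b) →
    (∀ t ∈ T, t < b) →
    ∀ m, (∃ F ⊆ T, F.sum id = m) ↔ m < b := by
  classical
  induction T using Finset.strongInduction with
  | _ T IH =>
    intro b h0 hcov hb helem
    rcases eq_or_ne T ∅ with rfl | hne
    · -- T = ∅ : sums = {0}, so b = 1
      have hb1 : b ≠ 0 := fun h => hb ∅ (by simp) (by simp [h])
      have hb2 : b ≤ 1 := by
        by_contra h
        obtain ⟨F, hF, hFs⟩ := hcov 1 (by omega)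
        have : F = ∅ := Finset.subset_empty.1 hF
        simp [this] at hFs
      intro m
      constructor
      · rintro ⟨F, hF, rfl⟩
        have : F = ∅ := Finset.subset_empty.1 hF
        simp [this]; omega
      · intro hm
        exact ⟨∅, by simp, by simp; omega⟩
    · have hTne : T.Nonempty := Finset.nonempty_iff_ne_empty.2 hne
      set M := T.max' hTne with hM
      have hMT : M ∈ T := T.max'_mem hTne
      have hMb : M < b := helem M hMT
      set T' := T.erase M with hT'
      have hss : T' ⊂ T := Finset.erase_ssubset hMT
      have hcovM : ∀ m < M, ∃ F ⊆ T', F.sum id = m := by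
        intro m hm
        obtain ⟨F, hF, hFs⟩ := hcov m (by omega)
        refine ⟨F, ?_, hFs⟩
        intro x hx
        refine Finset.mem_erase.2 ⟨?_, hF hx⟩
        rintro rfl
        have : M ≤ F.sum id := Finset.single_le_sum (f := id) (fun i _ => Nat.zero_le _) hx
        omega
      have hex : ∃ m, ¬ ∃ F ⊆ T', F.sum id = m := by
        refine ⟨T'.sum id + 1, ?_⟩
        rintro ⟨F, hF, hFs⟩
        have : F.sum id ≤ T'.sum id :=
          Finset.sum_le_sum_of_subset hF
        omega
      set b' := Nat.find hex with hb'def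
      have hb'spec : ¬ ∃ F ⊆ T', F.sum id = b' := Nat.find_spec hex
      have hcov' : ∀ m < b', ∃ F ⊆ T', F.sum id = m := by
        intro m hm
        have := Nat.find_min hex hm
        push_neg at this
        exact not_not.1 (by simpa using this)
      have hMb' : M ≤ b' := by
        by_contra h
        exact hb'spec (hcovM b' (by omega))
      have helem' : ∀ t ∈ T', t < b' := by
        intro t ht
        have h1 : t ≠ M := (Finset.mem_erase.1 ht).1
        have h2 : t ≤ M := T.le_max' t (Finset.mem_erase.1 ht).2
        omega
      have h0' : 0 ∉ T' := fun h => h0 (Finset.erase_subset _ _ h)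
      have hb'' : ∀ F ⊆ T', F.sum id ≠ b' := by
        intro F hF h
        exact hb'spec ⟨F, hF, h⟩
      have char' := IH T' hss b' h0' hcov' hb'' helem'
      -- characterization of sums of T
      have charT : ∀ m, (∃ F ⊆ T, F.sum id = m) ↔ m < b' + M := by
        intro m
        constructor
        · rintro ⟨F, hF, rfl⟩
          by_cases hMF : M ∈ F
          · have hsum : F.sum id = M + (F.erase M).sum id := by
              have h := (Finset.add_sum_erase F id hMF).symm
              simpa using h
            have hFsub : F.erase M ⊆ T' := Finset.erase_subset_erase _ hF
            have : (F.erase M).sum id < b' := (char' _).1 ⟨F.erase M, hFsub, rfl⟩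
            omega
          · have hFsub : F ⊆ T' := fun x hx =>
              Finset.mem_erase.2 ⟨fun h => hMF (h ▸ hx), hF hx⟩
            have : F.sum id < b' := (char' _).1 ⟨F, hFsub, rfl⟩
            omega
        · intro hm
          by_cases h : m < b'
          · obtain ⟨F, hF, hFs⟩ := (char' m).2 h
            exact ⟨F, hF.trans (Finset.erase_subset _ _), hFs⟩
          · push_neg at h
            obtain ⟨F, hF, hFs⟩ := (char' (m - M)).2 (by omega)
            have hMF : M ∉ F := fun hh => (Finset.mem_erase.1 (hF hh)).1 rfl
            refine ⟨insert M F, ?_, ?_⟩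
            · exact Finset.insert_subset hMT (hF.trans (Finset.erase_subset _ _))
            · rw [Finset.sum_insert hMF, hFs]
              simp only [id]
              omega
      have hbeq : b = b' + M := by
        have h1 : ¬ (b < b' + M) := fun h => hb _ ((charT b).2 h).choose_spec.1
          ((charT b).2 h).choose_spec.2
        have h2 : ¬ (b' + M < b) := by
          intro h
          obtain ⟨F, hF, hFs⟩ := hcov (b' + M) h
          exact absurd ((charT _).1 ⟨F, hF, hFs⟩) (by omega)
        omega
      intro m
      rw [charT m, hbeq]

theorem stmt_2 (b : ℕ → ℕ)
    (hbmono : ∀ n, 1 ≤ n → b n < b (n + 1))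
    (hb1 : 3 ≤ b 1)
    (hb2 : b 2 = 3 * b 1 + 2) :
    ¬ ∃ a : ℕ → ℕ,
      (∀ n, 1 ≤ n → a n < a (n + 1)) ∧
      (∀ n, 1 ≤ n → 0 < a n) ∧
      subsetSums (a '' {n | 1 ≤ n}) = (b '' {n | 1 ≤ n})ᶜ := by
  classical
  rintro ⟨a, hamono, hapos, hP⟩
  set β := b 1 with hβdef
  set A : Set ℕ := a '' {n | 1 ≤ n} with hA
  set B : Set ℕ := b '' {n | 1 ≤ n} with hB
  -- monotonicity facts about b
  have h1le : ∀ n, 1 ≤ n → β ≤ b n := by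
    intro n hn
    induction n, hn using Nat.le_induction with
    | base => exact le_rfl
    | succ n hn ih => exact ih.trans (hbmono n hn).le
  have h2le : ∀ n, 2 ≤ n → 3 * β + 2 ≤ b n := by
    intro n hn
    induction n, hn using Nat.le_induction with
    | base => rw [hb2]
    | succ n hn ih => exact ih.trans (hbmono n (by omega)).le
  have memS : ∀ m, m ∈ subsetSums A ↔ m ∉ B := by
    intro m; rw [hP]; rfl
  have hβB : β ∈ B := ⟨1, by norm_num, rfl⟩
  have h3B : 3 * β + 2 ∈ B := ⟨2, by norm_num, hb2⟩
  have hSβ : β ∉ subsetSums A := fun h => (memS β).1 h hβB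
  have hS3 : 3 * β + 2 ∉ subsetSums A := fun h => (memS _).1 h h3B
  have hScov : ∀ m, m < β → m ∈ subsetSums A := by
    intro m hm
    refine (memS m).2 ?_
    rintro ⟨n, hn, rfl⟩
    have := h1le n hn
    omega
  have hSmid : ∀ m, β < m → m < 3 * β + 2 → m ∈ subsetSums A := by
    intro m h1 h2
    refine (memS m).2 ?_
    rintro ⟨n, hn, rfl⟩
    rcases eq_or_lt_of_le (show 1 ≤ n from hn) with rfl | hn2
    · omega
    · have := h2le n hn2
      omega
  have hApos : ∀ x ∈ A, 0 < x := by
    rintro x ⟨n, hn, rfl⟩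
    exact hapos n hn
  have hmemA_S : ∀ x ∈ A, x ∈ subsetSums A := by
    intro x hx
    exact ⟨{x}, by simpa using hx, by simp⟩
  have hAneβ : ∀ x ∈ A, x ≠ β := by
    intro x hx h
    exact hSβ (h ▸ hmemA_S x hx)
  -- the finset of small elements of A
  set T : Finset ℕ := (Finset.range β).filter (· ∈ A) with hT
  have hTmem : ∀ x, x ∈ T ↔ x < β ∧ x ∈ A := by
    intro x; simp [hT]
  have hTsubA : ∀ x ∈ T, x ∈ A := fun x hx => ((hTmem x).1 hx).2
  have hT0 : 0 ∉ T := fun h => absurd (hApos 0 (hTsubA 0 h)) (by omega)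
  have hTelem : ∀ t ∈ T, t < β := fun t ht => ((hTmem t).1 ht).1
  have hTcov : ∀ m < β, ∃ F ⊆ T, F.sum id = m := by
    intro m hm
    obtain ⟨F, hFA, hFs⟩ := hScov m hm
    refine ⟨F, ?_, hFs⟩
    intro x hx
    refine (hTmem x).2 ⟨?_, hFA hx⟩
    have : x ≤ F.sum id := Finset.single_le_sum (f := id) (fun i _ => Nat.zero_le _) hx
    omega
  have hTnb : ∀ F ⊆ T, F.sum id ≠ β := by
    intro F hF h
    exact hSβ ⟨F, fun x hx => hTsubA x (hF hx), h⟩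
  have char := sums_char T β hT0 hTcov hTnb hTelem
  -- decomposition lemma: representations of numbers in (β, 2β+2) use exactly one big element
  have split : ∀ F : Finset ℕ, ↑F ⊆ A → β < F.sum id → F.sum id < 2 * β + 2 →
      ∃ d, d ∈ A ∧ β + 1 ≤ d ∧ d ≤ F.sum id ∧ F.sum id - d < β := by
    intro F hFA hs1 hs2
    set Fs := F.filter (fun x => x < β) with hFs
    set Fb := F.filter (fun x => ¬ x < β) with hFb
    have hsum : Fs.sum id + Fb.sum id = F.sum id :=
      Finset.sum_filter_add_sum_filter_not F _ id
    have hFsT : Fs ⊆ T := by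
      intro x hx
      rw [Finset.mem_filter] at hx
      exact (hTmem x).2 ⟨hx.2, hFA hx.1⟩
    have hFs_lt : Fs.sum id < β := (char _).1 ⟨Fs, hFsT, rfl⟩
    have hbig : ∀ x ∈ Fb, β + 1 ≤ x := by
      intro x hx
      rw [Finset.mem_filter] at hx
      have h1 : x ∈ A := hFA hx.1
      have h2 := hAneβ x h1
      omega
    have hcard : Fb.card ≤ 1 := by
      by_contra h
      obtain ⟨x, hx, y, hy, hxy⟩ := Finset.one_lt_card.1 (not_le.1 h)
      have hsub : ({x, y} : Finset ℕ) ⊆ Fb := by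
        intro z hz
        rcases Finset.mem_insert.1 hz with rfl | hz
        · exact hx
        · rw [Finset.mem_singleton.1 hz]; exact hy
      have hle : x + y ≤ Fb.sum id := by
        have := Finset.sum_le_sum_of_subset (f := id) hsub
        rwa [Finset.sum_pair hxy] at this
      have h1 := hbig x hx
      have h2 := hbig y hy
      omega
    have hFbne : Fb.Nonempty := by
      rw [Finset.nonempty_iff_ne_empty]
      rintro h
      rw [h] at hsum
      simp only [Finset.sum_empty, add_zero] at hsum
      omega
    obtain ⟨d, hd⟩ := Finset.card_eq_one.1 (le_antisymm hcard (Finset.one_le_card.2 hFbne))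
    have hdFb : d ∈ Fb := by rw [hd]; exact Finset.mem_singleton_self d
    have hdsum : Fb.sum id = d := by rw [hd]; simp
    have hdA : d ∈ A := hFA (Finset.filter_subset _ _ hdFb)
    exact ⟨d, hdA, hbig d hdFb, by omega, by omega⟩
  -- step 1: β + 1 ∈ A
  obtain ⟨F1, hF1A, hF1⟩ := hSmid (β + 1) (by omega) (by omega)
  obtain ⟨d1, hd1A, hd1ge, hd1le, _⟩ := split F1 hF1A (by omega) (by omega)
  rw [hF1] at hd1le
  have hcA : β + 1 ∈ A := by
    have : d1 = β + 1 := by omega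
    rwa [this] at hd1A
  -- step 2: d ∈ [β+2, 2β+1] ∩ A
  obtain ⟨F2, hF2A, hF2⟩ := hSmid (2 * β + 1) (by omega) (by omega)
  obtain ⟨d, hdA, hdge, hdle, hdrem⟩ := split F2 hF2A (by omega) (by omega)
  rw [hF2] at hdle hdrem
  have hd2 : β + 2 ≤ d := by omega
  -- step 3: build a subset of A summing to 3β + 2
  obtain ⟨S0, hS0T, hS0⟩ := (char (2 * β + 1 - d)).2 (by omega)
  have hβ1S0 : β + 1 ∉ insert d S0 := by
    intro h
    rcases Finset.mem_insert.1 h with h | h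
    · omega
    · have := hTelem _ (hS0T h); omega
  have hdS0 : d ∉ S0 := fun h => absurd (hTelem _ (hS0T h)) (by omega)
  refine hS3 ⟨insert (β + 1) (insert d S0), ?_, ?_⟩
  · intro x hx
    simp only [Finset.coe_insert, Set.mem_insert_iff] at hx
    rcases hx with rfl | rfl | hx
    · exact hcA
    · exact hdA
    · exact hTsubA x (hS0T hx)
  · rw [Finset.sum_insert hβ1S0, Finset.sum_insert hdS0, hS0]
    simp only [id]
    omega
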